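/- Let β : [−q, ∞) → ℝ be C¹ with β(−q) = 0, β nonnegative and nondecreasing, and suppose β'(ρ) ≥ β(ρ)²/(4(R−q)²ρ) for all ρ ≥ r > 0, where R − q > 0. If β(r₁) > 0 for some r₁ ≥ r, then β blows up in finite ρ: there exists ρ* < ∞ such that β(ρ) → ∞ as ρ → ρ* (β cannot be extended as a finite C¹ function past ρ*). -/

import Mathlib

/-- Fritz John's differential inequality: a nonnegative, nondecreasing `C¹` function `β`
on `[-q,∞)` with `β(-q) = 0`, satisfying `β'(ρ) ≥ β(ρ)²/(4(R−q)²ρ)` for all `ρ ≥ r > 0`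
(`R − q > 0`), which is positive at some `r₁ ≥ r`, cannot remain finite: no such globally
defined finite `C¹` function exists (it must blow up at some finite `ρ*`). -/
theorem stmt6 (q R r r₁ : ℝ) (hr : 0 < r) (hRq : 0 < R - q) (hr₁ : r ≤ r₁)
    (β : ℝ → ℝ) (hβ0 : β (-q) = 0)
    (hnonneg : ∀ ρ : ℝ, -q ≤ ρ → 0 ≤ β ρ)
    (hmono : MonotoneOn β (Set.Ici (-q)))
    (hderiv : ∀ ρ : ℝ, r ≤ ρ →
      HasDerivAt β (deriv β ρ) ρ ∧ (β ρ) ^ 2 / (4 * (R - q) ^ 2 * ρ) ≤ deriv β ρ)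
    (hpos : 0 < β r₁) : False := by
  have hr₁pos : 0 < r₁ := lt_of_lt_of_le hr hr₁
  obtain ⟨c, hc⟩ : ∃ c : ℝ, c = 1 / (4 * (R - q) ^ 2) := ⟨_, rfl⟩
  have hcpos : 0 < c := by rw [hc]; positivity
  have hdiff : ∀ ρ ∈ Set.Ici r₁, HasDerivAt β (deriv β ρ) ρ := fun ρ hρ =>
    (hderiv ρ (le_trans hr₁ hρ)).1
  have hcont : ContinuousOn β (Set.Ici r₁) := fun ρ hρ =>
    ((hdiff ρ hρ).continuousAt).continuousWithinAt
  have hmonoβ : MonotoneOn β (Set.Ici r₁) := by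
    apply monotoneOn_of_deriv_nonneg (convex_Ici r₁) hcont
    · intro ρ hρ
      rw [interior_Ici] at hρ
      exact ((hdiff ρ (Set.mem_Ici.mpr hρ.le)).differentiableAt).differentiableWithinAt
    · intro ρ hρ
      rw [interior_Ici] at hρ
      have h2 := (hderiv ρ (le_trans hr₁ hρ.le)).2
      have hρpos : 0 < ρ := lt_trans hr₁pos hρ
      have : 0 ≤ β ρ ^ 2 / (4 * (R - q) ^ 2 * ρ) := by positivity
      linarith
  have hβpos : ∀ ρ ∈ Set.Ici r₁, 0 < β ρ := fun ρ hρ =>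
    lt_of_lt_of_le hpos (hmonoβ Set.self_mem_Ici hρ hρ)
  set g : ℝ → ℝ := fun ρ => (β ρ)⁻¹ + c * Real.log ρ with hg
  have hgderiv : ∀ ρ ∈ Set.Ioi r₁,
      HasDerivAt g (-(deriv β ρ) / (β ρ) ^ 2 + c * ρ⁻¹) ρ := by
    intro ρ hρ
    have hρpos : 0 < ρ := lt_trans hr₁pos hρ
    have h1 : HasDerivAt (fun y => (β y)⁻¹) (-(deriv β ρ) / (β ρ) ^ 2) ρ :=
      (hdiff ρ hρ.out.le).inv (hβpos ρ hρ.out.le).ne'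
    have h2 : HasDerivAt (fun y => c * Real.log y) (c * ρ⁻¹) ρ :=
      (Real.hasDerivAt_log hρpos.ne').const_mul c
    exact h1.add h2
  have hganti : AntitoneOn g (Set.Ici r₁) := by
    apply antitoneOn_of_deriv_nonpos (convex_Ici r₁)
    · apply ContinuousOn.add
      · exact ContinuousOn.inv₀ hcont (fun ρ hρ => (hβpos ρ hρ).ne')
      · apply ContinuousOn.mul continuousOn_const
        apply Real.continuousOn_log.mono
        intro ρ hρ
        exact fun h => (lt_of_lt_of_le hr₁pos hρ).ne' h
    · intro ρ hρ
      rw [interior_Ici] at hρ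
      exact ((hgderiv ρ hρ).differentiableAt).differentiableWithinAt
    · intro ρ hρ
      rw [interior_Ici] at hρ
      rw [(hgderiv ρ hρ).deriv]
      have hρpos : 0 < ρ := lt_trans hr₁pos hρ
      have hβρ : 0 < β ρ := hβpos ρ hρ.out.le
      have h2 := (hderiv ρ (le_trans hr₁ hρ.out.le)).2
      have hβ2 : 0 < β ρ ^ 2 := by positivity
      have heq : c * ρ⁻¹ * β ρ ^ 2 = β ρ ^ 2 / (4 * (R - q) ^ 2 * ρ) := by
        rw [hc]
        field_simp
      have h5 : c * ρ⁻¹ ≤ deriv β ρ / β ρ ^ 2 := by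
        rw [le_div_iff₀ hβ2, heq]
        exact h2
      rw [neg_div]
      linarith [h5]
  obtain ⟨K, hK⟩ : ∃ K : ℝ, K = (β r₁)⁻¹ + c * Real.log r₁ + 1 := ⟨_, rfl⟩
  obtain ⟨p, hp⟩ : ∃ p : ℝ, p = max r₁ (Real.exp (K / c)) := ⟨_, rfl⟩
  have hpge : r₁ ≤ p := hp ▸ le_max_left _ _
  have hlog : K / c ≤ Real.log p := by
    rw [hp]
    calc K / c = Real.log (Real.exp (K / c)) := (Real.log_exp _).symm
    _ ≤ Real.log (max r₁ (Real.exp (K / c))) :=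
      Real.log_le_log (Real.exp_pos _) (le_max_right _ _)
  have hgle : g p ≤ g r₁ := hganti Set.self_mem_Ici hpge hpge
  have hK' : c * (K / c) ≤ c * Real.log p := mul_le_mul_of_nonneg_left hlog hcpos.le
  rw [mul_div_cancel₀ _ hcpos.ne'] at hK'
  have hinv : 0 < (β p)⁻¹ := inv_pos.mpr (hβpos p hpge)
  simp only [hg] at hgle
  linarith
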